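/- For all partitions λ, μ and all u ∈ ℂ, the Nekrasov factor satisfies the conjugation symmetry N_{λ,μ}(u) = N_{μ',λ'}(u), where λ' denotes the conjugate (transposed) partition. -/

import Mathlib

open Finset

noncomputable section

/-- The `i`-th part (0-indexed) of a partition given as a list of parts. -/
def part (l : List ℕ) (i : ℕ) : ℕ := l.getD i 0

/-- The `j`-th column length (0-indexed), i.e. λ'_{j+1} = #{i : λ_i ≥ j+1}. -/
def conjPart (l : List ℕ) (j : ℕ) : ℕ := (l.filter (fun p => j < p)).length

/-- A list of naturals represents a partition: weakly decreasing with positive parts. -/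
def IsPartition (l : List ℕ) : Prop := l.Pairwise (· ≥ ·) ∧ ∀ p ∈ l, 0 < p

/-- The Nekrasov factor N_{λ,μ}(u) =
  ∏_{(i,j)∈λ}(1 - q^{-ℓ_λ(i,j)-a_μ(i,j)-1} u) · ∏_{(i,j)∈μ}(1 - q^{ℓ_μ(i,j)+a_λ(i,j)+1} u),
  with cells 0-indexed: arm a_μ(i,j) = μ_{i+1} - (j+1), leg ℓ_λ(i,j) = λ'_{j+1} - (i+1). -/
def nek (q u : ℂ) (lam mu : List ℕ) : ℂ :=
  (∏ i ∈ Finset.range lam.length, ∏ j ∈ Finset.range (part lam i),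
    (1 - q ^ (-((conjPart lam j : ℤ) - ((i : ℤ) + 1)) - ((part mu i : ℤ) - ((j : ℤ) + 1)) - 1) * u)) *
  (∏ i ∈ Finset.range mu.length, ∏ j ∈ Finset.range (part mu i),
    (1 - q ^ (((conjPart mu j : ℤ) - ((i : ℤ) + 1)) + ((part lam i : ℤ) - ((j : ℤ) + 1)) + 1) * u))

/-- λ̄ : all parts decreased by 1, zero parts dropped. -/
def bar (l : List ℕ) : List ℕ := (l.map (fun p => p - 1)).filter (fun p => 0 < p)

/-- r_n(λ) = (λ_1+1, …, λ_n+1, λ_{n+2}, λ_{n+3}, …). -/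
def rn (n : ℕ) (l : List ℕ) : List ℕ :=
  ((List.range n).map (fun i => part l i + 1)) ++ l.drop (n + 1)

/-- The conjugate (transposed) partition as a list. -/
def conjList (l : List ℕ) : List ℕ :=
  (List.range (part l 0)).map (fun j => conjPart l j)

end

noncomputable section NekrasovProof
variable {l m : List ℕ}

lemma part_eq_zero_of_le (h : l.length ≤ i) : part l i = 0 := by
  simp [part, List.getD_eq_getElem?_getD, List.getElem?_eq_none h]

lemma part_anti (hl : l.Pairwise (· ≥ ·)) {i j : ℕ} (hij : i ≤ j) : part l j ≤ part l i := by
  rcases lt_or_ge j l.length with hj | hj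
  · have hi : i < l.length := lt_of_le_of_lt hij hj
    rw [part, part, List.getD_eq_getElem l 0 hj, List.getD_eq_getElem l 0 hi]
    exact hl.rel_get_of_le (by simpa using hij)
  · rw [part_eq_zero_of_le hj]; exact Nat.zero_le _

lemma lt_conjPart_iff (hl : l.Pairwise (· ≥ ·)) {a b : ℕ} :
    a < conjPart l b ↔ b < part l a := by
  constructor
  · intro h
    by_contra hb
    push_neg at hb
    -- all entries with index ≥ a are ≤ part l a ≤ b, so filter length ≤ a
    have : conjPart l b ≤ a := by
      unfold conjPart
      have : l.filter (fun p => decide (b < p)) = (l.take a).filter (fun p => decide (b < p)) ++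
          (l.drop a).filter (fun p => decide (b < p)) := by
        rw [← List.filter_append, List.take_append_drop]
      rw [this, List.length_append]
      have h2 : (l.drop a).filter (fun p => decide (b < p)) = [] := by
        apply List.filter_eq_nil_iff.mpr
        intro x hx
        simp only [decide_eq_true_eq]
        rcases List.mem_iff_getElem.mp hx with ⟨i, hi, rfl⟩
        push_neg
        have hai : a + i < l.length := by rw [List.length_drop] at hi; omega
        simp only [List.getElem_drop]
        have : l[a + i]'hai ≤ part l a := by
          calc l[a+i]'hai = part l (a+i) := by
                rw [part, List.getD_eq_getElem l 0 hai]
              _ ≤ part l a := part_anti hl (Nat.le_add_right _ _)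
        omega
      rw [h2]
      simp only [List.length_nil, add_zero]
      calc ((l.take a).filter _).length ≤ (l.take a).length := List.length_filter_le _ _
        _ ≤ a := by simp
    omega
  · intro h
    have ha : a < l.length := by
      by_contra hc
      push_neg at hc
      rw [part_eq_zero_of_le hc] at h; omega
    -- first a+1 entries are > b
    have : a + 1 ≤ conjPart l b := by
      unfold conjPart
      have hsplit : l.filter (fun p => decide (b < p)) =
          (l.take (a+1)).filter (fun p => decide (b < p)) ++
          (l.drop (a+1)).filter (fun p => decide (b < p)) := by
        rw [← List.filter_append, List.take_append_drop]
      rw [hsplit, List.length_append]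
      have h1 : (l.take (a+1)).filter (fun p => decide (b < p)) = l.take (a+1) := by
        apply List.filter_eq_self.mpr
        intro x hx
        simp only [decide_eq_true_eq]
        rcases List.mem_iff_getElem.mp hx with ⟨i, hi, rfl⟩
        rw [List.getElem_take]
        have hil : i < l.length := by
          have := hi; rw [List.length_take] at this; omega
        have hia : i ≤ a := by rw [List.length_take] at hi; omega
        have : part l a ≤ part l i := part_anti hl hia
        have : l[i] = part l i := by rw [part, List.getD_eq_getElem l 0 hil]
        have hpa : part l a = l[a]'ha := by rw [part, List.getD_eq_getElem l 0 ha]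
        omega
      rw [h1]
      have : (l.take (a+1)).length = a+1 := by simp; omega
      omega
    omega


lemma length_filter_range_lt (m n : ℕ) :
    ((List.range n).filter (fun i => decide (i < m))).length = min m n := by
  induction n with
  | zero => simp
  | succ n ih =>
    rw [List.range_succ, List.filter_append, List.length_append, ih]
    by_cases h : n < m <;> simp [h] <;> omega

lemma mem_le_head (hl : l.Pairwise (· ≥ ·)) {p : ℕ} (hp : p ∈ l) : p ≤ part l 0 := by
  rcases List.mem_iff_getElem.mp hp with ⟨i, hi, rfl⟩
  have : l[i] = part l i := by rw [part, List.getD_eq_getElem l 0 hi]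
  have := part_anti hl (Nat.zero_le i)
  omega

lemma conjPart_eq_zero (hl : l.Pairwise (· ≥ ·)) {j : ℕ} (hj : part l 0 ≤ j) :
    conjPart l j = 0 := by
  unfold conjPart
  rw [List.length_eq_zero_iff]
  apply List.filter_eq_nil_iff.mpr
  intro p hp
  have := mem_le_head hl hp
  simp only [decide_eq_true_eq]
  omega

lemma part_conjList (hl : l.Pairwise (· ≥ ·)) (i : ℕ) :
    part (conjList l) i = conjPart l i := by
  rcases lt_or_ge i (part l 0) with h | h
  · rw [part, conjList, List.getD_eq_getElem _ 0 (by simpa using h)]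
    simp
  · rw [part_eq_zero_of_le (by simp [conjList]; exact h), conjPart_eq_zero hl h]

lemma conjPart_conjList (hl : l.Pairwise (· ≥ ·)) (j : ℕ) :
    conjPart (conjList l) j = part l j := by
  unfold conjPart conjList
  rw [List.filter_map, List.length_map]
  have hc : ((fun p => decide (j < p)) ∘ fun i => conjPart l i) = (fun i => decide (j < conjPart l i)) := rfl
  rw [hc]
  have : ((List.range (part l 0)).filter (fun i => decide (j < conjPart l i))) =
      ((List.range (part l 0)).filter (fun i => decide (i < part l j))) := by
    apply List.filter_congr
    intro i _
    simp only [decide_eq_decide]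
    exact lt_conjPart_iff hl
  rw [this, length_filter_range_lt]
  have := part_anti hl (Nat.zero_le j)
  omega


def pp (l : List ℕ) (a : ℕ) : ℤ := (part l a : ℤ) - a - 1
def hh (l : List ℕ) (b : ℕ) : ℤ := (b : ℤ) - conjPart l b
def bnd (l : List ℕ) (t : ℤ) : ℕ := max l.length (-t).toNat
def bb (l : List ℕ) (t : ℤ) : ℕ := ((Finset.range (bnd l t)).filter (fun a => t ≤ pp l a)).card

lemma cell_iff (hl : l.Pairwise (· ≥ ·)) {a b : ℕ} :
    b < part l a ↔ hh l b < pp l a := by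
  constructor
  · intro h
    have h2 : a < conjPart l b := (lt_conjPart_iff hl).mpr h
    unfold hh pp
    omega
  · intro h
    by_contra hc
    push_neg at hc
    have h2 : conjPart l b ≤ a := by
      by_contra h3
      push_neg at h3
      exact absurd ((lt_conjPart_iff hl).mp h3) (by omega)
    unfold hh pp at h
    omega

lemma le_iff_pp_lt_hh (hl : l.Pairwise (· ≥ ·)) {a b : ℕ} :
    part l a ≤ b ↔ pp l a < hh l b := by
  constructor
  · intro h
    have h2 : conjPart l b ≤ a := by
      by_contra h3
      push_neg at h3
      exact absurd ((lt_conjPart_iff hl).mp h3) (by omega)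
    unfold hh pp
    omega
  · intro h
    by_contra hc
    push_neg at hc
    have := (cell_iff hl).mp hc
    omega

lemma pp_ne_hh (hl : l.Pairwise (· ≥ ·)) (a b : ℕ) : pp l a ≠ hh l b := by
  rcases lt_or_ge b (part l a) with h | h
  · have := (cell_iff hl).mp h; omega
  · have := (le_iff_pp_lt_hh hl).mp h; omega

lemma pp_strict_anti (hl : l.Pairwise (· ≥ ·)) {a a' : ℕ} (h : a < a') : pp l a' < pp l a := by
  have := part_anti hl (le_of_lt h)
  unfold pp
  omega

lemma pp_anti (hl : l.Pairwise (· ≥ ·)) {a a' : ℕ} (h : a ≤ a') : pp l a' ≤ pp l a := by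
  rcases eq_or_lt_of_le h with rfl | h
  · exact le_refl _
  · exact le_of_lt (pp_strict_anti hl h)

lemma pp_lt_of_bnd {t : ℤ} {a : ℕ} (h : bnd l t ≤ a) : pp l a < t := by
  have h1 : l.length ≤ a := le_trans (le_max_left _ _) h
  have h2 : (-t).toNat ≤ a := le_trans (le_max_right _ _) h
  have h3 : -t ≤ ((-t).toNat : ℤ) := Int.self_le_toNat _
  rw [pp, part_eq_zero_of_le h1]
  have : ((-t).toNat : ℤ) ≤ (a : ℤ) := by exact_mod_cast h2
  omega

lemma dc_eq_range {S : Finset ℕ} (h : ∀ a b : ℕ, a ≤ b → b ∈ S → a ∈ S) :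
    S = Finset.range S.card := by
  rcases S.eq_empty_or_nonempty with rfl | hS
  · simp
  · have hmax := S.max'_mem hS
    have : S = Finset.range (S.max' hS + 1) := by
      ext a
      simp only [Finset.mem_range]
      constructor
      · intro ha; have := S.le_max' a ha; omega
      · intro ha; exact h a _ (by omega) hmax
    have hc := congrArg Finset.card this
    rw [Finset.card_range] at hc
    rw [hc]
    exact this

lemma lt_bb_iff (hl : l.Pairwise (· ≥ ·)) {t : ℤ} {a : ℕ} :
    a < bb l t ↔ t ≤ pp l a := by
  have hdc := dc_eq_range (S := (Finset.range (bnd l t)).filter (fun a => t ≤ pp l a))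
    (by
      intro a b hab hb
      simp only [Finset.mem_filter, Finset.mem_range] at hb ⊢
      exact ⟨by omega, le_trans hb.2 (pp_anti hl hab)⟩)
  constructor
  · intro h
    have : a ∈ Finset.range (bb l t) := Finset.mem_range.mpr h
    rw [bb, ← hdc] at this
    exact (Finset.mem_filter.mp this).2
  · intro h
    have ha : a < bnd l t := by
      by_contra hc
      push_neg at hc
      exact absurd h (by have := pp_lt_of_bnd hc; omega)
    have : a ∈ (Finset.range (bnd l t)).filter (fun a => t ≤ pp l a) :=
      Finset.mem_filter.mpr ⟨Finset.mem_range.mpr ha, h⟩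
    rw [hdc] at this
    exact Finset.mem_range.mp this

lemma bb_le_iff (hl : l.Pairwise (· ≥ ·)) {t : ℤ} {a : ℕ} :
    bb l t ≤ a ↔ pp l a < t := by
  constructor
  · intro h
    by_contra hc
    push_neg at hc
    have := (lt_bb_iff hl).mpr hc
    omega
  · intro h
    by_contra hc
    push_neg at hc
    have := (lt_bb_iff hl).mp hc
    omega

lemma bb_anti (hl : l.Pairwise (· ≥ ·)) {t t' : ℤ} (h : t ≤ t') : bb l t' ≤ bb l t := by
  by_contra hc
  push_neg at hc
  have h1 : t' ≤ pp l (bb l t) := (lt_bb_iff hl).mp hc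
  have h2 : pp l (bb l t) < t := (bb_le_iff hl).mp (le_refl _)
  omega

lemma bb_pp (hl : l.Pairwise (· ≥ ·)) (a : ℕ) : bb l (pp l a) = a + 1 := by
  have h1 : a < bb l (pp l a) := (lt_bb_iff hl).mpr (le_refl _)
  have h2 : bb l (pp l a) ≤ a + 1 := by
    rw [bb_le_iff hl]
    exact pp_strict_anti hl (by omega)
  omega

lemma bb_pp_succ (hl : l.Pairwise (· ≥ ·)) (a : ℕ) : bb l (pp l a + 1) = a := by
  have h1 : bb l (pp l a + 1) ≤ a := by rw [bb_le_iff hl]; omega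
  have h2 : a ≤ bb l (pp l a + 1) := by
    rcases Nat.eq_zero_or_pos a with rfl | ha
    · omega
    · have : a - 1 < bb l (pp l a + 1) := by
        rw [lt_bb_iff hl]
        have := pp_strict_anti hl (show a - 1 < a by omega)
        omega
      omega
  omega

def hit (l : List ℕ) (t : ℤ) : Prop := bb l (t + 1) < bb l t

lemma bb_succ_le (hl : l.Pairwise (· ≥ ·)) (t : ℤ) : bb l (t+1) ≤ bb l t :=
  bb_anti hl (by omega)

lemma hit_iff (hl : l.Pairwise (· ≥ ·)) {t : ℤ} : hit l t ↔ ∃ a, pp l a = t := by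
  constructor
  · intro h
    refine ⟨bb l (t+1), ?_⟩
    have h1 : t ≤ pp l (bb l (t+1)) := (lt_bb_iff hl).mp h
    have h2 : pp l (bb l (t+1)) < t + 1 := (bb_le_iff hl).mp (le_refl _)
    omega
  · rintro ⟨a, rfl⟩
    unfold hit
    rw [bb_pp hl, bb_pp_succ hl]
    omega

lemma bb_of_hit (hl : l.Pairwise (· ≥ ·)) {t : ℤ} (h : hit l t) : bb l t = bb l (t+1) + 1 := by
  rcases (hit_iff hl).mp h with ⟨a, rfl⟩
  rw [bb_pp hl, bb_pp_succ hl]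

lemma bb_of_not_hit (hl : l.Pairwise (· ≥ ·)) {t : ℤ} (h : ¬ hit l t) : bb l t = bb l (t+1) := by
  unfold hit at h
  have := bb_succ_le hl t
  omega

lemma bb_hh (hl : l.Pairwise (· ≥ ·)) (b : ℕ) : bb l (hh l b) = conjPart l b := by
  have : ∀ a : ℕ, a < bb l (hh l b) ↔ a < conjPart l b := by
    intro a
    rw [lt_bb_iff hl, lt_conjPart_iff hl, cell_iff hl]
    constructor
    · intro h
      rcases eq_or_lt_of_le h with he | h
      · exact absurd he.symm (pp_ne_hh hl a b)
      · exact h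
    · exact le_of_lt
  have h1 : ¬ (conjPart l b < bb l (hh l b)) := fun hx => lt_irrefl _ ((this _).mp hx)
  have h2 : ¬ (bb l (hh l b) < conjPart l b) := fun hx => lt_irrefl _ ((this _).mpr hx)
  omega

lemma hh_add_bb (hl : l.Pairwise (· ≥ ·)) (b : ℕ) : hh l b + bb l (hh l b) = b := by
  rw [bb_hh hl]
  unfold hh
  omega

lemma not_hit_hh (hl : l.Pairwise (· ≥ ·)) (b : ℕ) : ¬ hit l (hh l b) := by
  rw [hit_iff hl]
  rintro ⟨a, ha⟩
  exact pp_ne_hh hl a b ha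

lemma bb_nonneg_add {t : ℤ} (hl : l.Pairwise (· ≥ ·)) : 0 ≤ t + bb l t := by
  rcases le_or_gt 0 t with h | h
  · positivity
  · have : (-t).toNat - 1 < bb l t := by
      rw [lt_bb_iff hl]
      have h1 : 0 < (-t).toNat := by omega
      have h2 : (((-t).toNat - 1 : ℕ) : ℤ) = -t - 1 := by omega
      unfold pp
      omega
    omega

lemma hh_surj (hl : l.Pairwise (· ≥ ·)) {t : ℤ} (h : ¬ hit l t) :
    hh l ((t + bb l t).toNat) = t := by
  set b := (t + bb l t).toNat with hb
  have hbz : (b : ℤ) = t + bb l t := by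
    rw [hb, Int.toNat_of_nonneg (bb_nonneg_add hl)]
  -- show conjPart l b = bb l t
  have hcp : conjPart l b = bb l t := by
    have hnot : ∀ a, pp l a ≠ t := by
      intro a ha
      exact h ((hit_iff hl).mpr ⟨a, ha⟩)
    have hle : conjPart l b ≤ bb l t := by
      by_contra hc
      push_neg at hc
      have h1 : b < part l (bb l t) := (lt_conjPart_iff hl).mp hc
      have h2 : pp l (bb l t) < t := (bb_le_iff hl).mp (le_refl _)
      unfold pp at h2
      omega
    have hge : bb l t ≤ conjPart l b := by
      rcases Nat.eq_zero_or_pos (bb l t) with hz | hpos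
      · omega
      · have h1 : t ≤ pp l (bb l t - 1) := (lt_bb_iff hl).mp (by omega)
        have h1' : t < pp l (bb l t - 1) := by
          rcases eq_or_lt_of_le h1 with he | h'
          · exact absurd he.symm (hnot _)
          · exact h'
        have h2 : b < part l (bb l t - 1) := by
          unfold pp at h1'
          omega
        have := (lt_conjPart_iff hl).mpr h2
        omega
    omega
  unfold hh
  rw [hcp]
  omega


def pot (m x : ℤ) : ℤ := if m ≤ x then x - m + 1 else 0

lemma walk (f : ℕ → ℤ) (m : ℤ) (hstep : ∀ i, f i - 1 ≤ f (i+1) ∧ f (i+1) ≤ f i + 1) :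
    ∀ N : ℕ,
    (((Finset.range N).filter (fun i => f (i+1) = f i - 1 ∧ m ≤ f i)).card : ℤ) + pot m (f N)
    = (((Finset.range N).filter (fun i => f (i+1) = f i + 1 ∧ m - 1 ≤ f i)).card : ℤ)
      + pot m (f 0) := by
  intro N
  induction N with
  | zero => simp
  | succ N ih =>
    rw [Finset.range_add_one, Finset.filter_insert, Finset.filter_insert]
    have hs := hstep N
    by_cases hd : f (N+1) = f N - 1 ∧ m ≤ f N
    · rw [if_pos hd, if_neg (by omega : ¬(f (N+1) = f N + 1 ∧ m - 1 ≤ f N))]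
      rw [Finset.card_insert_of_notMem (by simp)]
      have hpot : pot m (f (N+1)) + 1 = pot m (f N) := by
        unfold pot; split_ifs <;> omega
      push_cast
      omega
    · by_cases hu : f (N+1) = f N + 1 ∧ m - 1 ≤ f N
      · rw [if_pos hu, if_neg hd]
        rw [Finset.card_insert_of_notMem (by simp)]
        have hpot : pot m (f (N+1)) = pot m (f N) + 1 := by
          unfold pot; split_ifs <;> omega
        push_cast
        omega
      · rw [if_neg hd, if_neg hu]
        have hpot : pot m (f (N+1)) = pot m (f N) := by
          unfold pot; split_ifs <;> omega
        omega

-- small bounds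
lemma conjPart_le_length (l : List ℕ) (b : ℕ) : conjPart l b ≤ l.length :=
  List.length_filter_le _ _

lemma hh_le_self (l : List ℕ) (b : ℕ) : hh l b ≤ b := by
  unfold hh; omega

lemma hh_lower (l : List ℕ) (b : ℕ) : -(l.length : ℤ) ≤ hh l b := by
  have := conjPart_le_length l b; unfold hh; omega

lemma pp_upper (hl : l.Pairwise (· ≥ ·)) (a : ℕ) : pp l a ≤ (part l 0 : ℤ) - 1 := by
  have := part_anti hl (Nat.zero_le a); unfold pp; omega

lemma pp_lower (l : List ℕ) (a : ℕ) : -(a : ℤ) - 1 ≤ pp l a := by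
  have : (0:ℤ) ≤ (part l a : ℤ) := by positivity
  unfold pp; omega

lemma bb_zero_of_big (hl : l.Pairwise (· ≥ ·)) {t : ℤ} (h : (part l 0 : ℤ) ≤ t) : bb l t = 0 := by
  have : bb l t ≤ 0 := by
    rw [bb_le_iff hl]
    have := pp_upper hl 0
    unfold pp at *
    omega
  omega

lemma bb_of_neg (hl : l.Pairwise (· ≥ ·)) {t : ℤ} (h : t ≤ -(l.length : ℤ)) :
    (bb l t : ℤ) = -t := by
  have h1 : (-t).toNat - 1 < bb l t ∨ (-t).toNat = 0 := by
    rcases Nat.eq_zero_or_pos (-t).toNat with hz | hpos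
    · exact Or.inr hz
    · left
      rw [lt_bb_iff hl]
      have : (((-t).toNat - 1 : ℕ) : ℤ) = -t - 1 := by omega
      unfold pp
      omega
  have h2 : bb l t ≤ (-t).toNat := by
    rw [bb_le_iff hl]
    have hlen : l.length ≤ (-t).toNat := by omega
    rw [pp, part_eq_zero_of_le hlen]
    have : ((-t).toNat : ℤ) = -t := by omega
    omega
  omega



lemma bb_succ_ge (hl : l.Pairwise (· ≥ ·)) (t : ℤ) : bb l t ≤ bb l (t+1) + 1 := by
  by_cases h : hit l t
  · rw [bb_of_hit hl h]
  · rw [bb_of_not_hit hl h]; omega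

lemma walk_eq (f : ℕ → ℤ) (mm : ℤ) (hstep : ∀ i, f i - 1 ≤ f (i+1) ∧ f (i+1) ≤ f i + 1)
    (N : ℕ) (h0 : pot mm (f 0) = 0) (hN : pot mm (f N) = 0) :
    ((Finset.range N).filter (fun i => f (i+1) = f i - 1 ∧ mm ≤ f i)).card
    = ((Finset.range N).filter (fun i => f (i+1) = f i + 1 ∧ mm - 1 ≤ f i)).card := by
  have := walk f mm hstep N
  omega

lemma KL (l m : List ℕ) (hl : l.Pairwise (· ≥ ·)) (hm : m.Pairwise (· ≥ ·)) (k : ℤ) (N' : ℕ)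
    (hN1 : l.length ≤ N') (hN2 : part l 0 ≤ N') :
    ((Finset.range N' ×ˢ Finset.range N').filter
      (fun ab => ab.2 < part l ab.1 ∧ part m ab.1 ≤ ab.2 ∧ pp l ab.1 - hh m ab.2 = k)).card
    = ((Finset.range N' ×ˢ Finset.range N').filter
      (fun ab => ab.2 < part l ab.1 ∧ part m ab.1 ≤ ab.2 ∧ hh l ab.2 - pp m ab.1 = k)).card := by
  classical
  obtain ⟨T, hTa, hTb, hTc, hTd, hTe⟩ :
      ∃ T : ℕ, (part l 0 : ℤ) ≤ (T:ℤ) + k ∧ (part m 0 : ℤ) ≤ (T:ℤ) ∧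
        (m.length : ℤ) ≤ (T:ℤ) ∧ (-(T:ℤ)) + k ≤ -(l.length : ℤ) ∧ (N' : ℤ) < (T:ℤ) := by
    exact ⟨l.length + m.length + part l 0 + part m 0 + N' + k.toNat + (-k).toNat + 1,
      by omega, by omega, by omega, by omega, by omega⟩
  set f : ℕ → ℤ := fun i => (bb l ((i:ℤ) - T + k) : ℤ) - (bb m ((i:ℤ) - T) : ℤ) with hf
  set mm : ℤ := max 1 (1 - k) with hmm
  have hmm1 : (1:ℤ) ≤ mm := le_max_left _ _
  have hmm2 : (1:ℤ) - k ≤ mm := le_max_right _ _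
  have hstep : ∀ i, f i - 1 ≤ f (i+1) ∧ f (i+1) ≤ f i + 1 := by
    intro i
    have e2 : ((i+1:ℕ):ℤ) - T = ((i:ℤ) - T) + 1 := by push_cast; ring
    have e1 : (i:ℤ) - T + 1 + k = ((i:ℤ) - T + k) + 1 := by ring
    simp only [hf, e2, e1]
    have l1 := bb_succ_le hl ((i:ℤ) - T + k)
    have l2 := bb_succ_ge hl ((i:ℤ) - T + k)
    have m1 := bb_succ_le hm ((i:ℤ) - T)
    have m2 := bb_succ_ge hm ((i:ℤ) - T)
    omega
  have hmain := walk_eq f mm hstep (2*T)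
    (by
      have e0 : ((0:ℕ):ℤ) - T = -(T:ℤ) := by push_cast; ring
      have hbl : (bb l (((0:ℕ):ℤ) - T + k) : ℤ) = (T:ℤ) - k := by
        rw [e0, bb_of_neg hl (by omega)]; ring
      have hbm : (bb m (((0:ℕ):ℤ) - T) : ℤ) = (T:ℤ) := by
        rw [e0, bb_of_neg hm (by omega)]; ring
      simp only [hf]
      rw [pot, if_neg (by omega)]
      )
    (by
      have e0 : ((2*T:ℕ):ℤ) - T = (T:ℤ) := by push_cast; ring
      have hbl : bb l (((2*T:ℕ):ℤ) - T + k) = 0 := by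
        rw [e0]; exact bb_zero_of_big hl (by omega)
      have hbm : bb m (((2*T:ℕ):ℤ) - T) = 0 := by
        rw [e0]; exact bb_zero_of_big hm (by omega)
      simp only [hf, hbl, hbm]
      rw [pot, if_neg (by omega)])
  -- Bijection 1 : u-cells ↔ down-steps
  have hbij1 : ((Finset.range N' ×ˢ Finset.range N').filter
      (fun ab => ab.2 < part l ab.1 ∧ part m ab.1 ≤ ab.2 ∧ pp l ab.1 - hh m ab.2 = k)).card
      = ((Finset.range (2*T)).filter (fun i => f (i+1) = f i - 1 ∧ mm ≤ f i)).card := by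
    apply Finset.card_bij' (fun ab _ => (hh m ab.2 + T).toNat)
      (fun i _ => (bb l ((i:ℤ) - T + k + 1), ((i:ℤ) - T + (bb m ((i:ℤ) - T) : ℤ)).toNat))
    · -- forward membership
      rintro ⟨a, b⟩ hab
      simp only [Finset.mem_filter, Finset.mem_product, Finset.mem_range] at hab
      obtain ⟨⟨ha, hb⟩, h1, h2, h3⟩ := hab
      have hlow : -(T:ℤ) ≤ hh m b := le_trans (by omega) (hh_lower m b)
      have hup : hh m b < T := lt_of_le_of_lt (hh_le_self m b) (by omega)
      have hidx : (((hh m b + T).toNat : ℕ) : ℤ) - T = hh m b := by omega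
      have hidx1 : (((hh m b + T).toNat + 1 : ℕ) : ℤ) - T = hh m b + 1 := by push_cast; omega
      have hpa : pp l a = hh m b + k := by omega
      have hhit : hit l (hh m b + k) := (hit_iff hl).mpr ⟨a, hpa⟩
      have hnh : ¬ hit m (hh m b) := not_hit_hh hm b
      have hbl := bb_of_hit hl hhit
      have hbm := bb_of_not_hit hm hnh
      have hbpa : bb l (hh m b + k) = a + 1 := by rw [← hpa, bb_pp hl]
      have hble : bb m (hh m b) ≤ a := by
        rw [bb_le_iff hm]
        exact (le_iff_pp_lt_hh hm).mp h2
      have hbsum : hh m b + (bb m (hh m b) : ℤ) = b := hh_add_bb hm b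
      have hpartl : (part l a : ℤ) = hh m b + k + a + 1 := by
        have hd : pp l a = (part l a : ℤ) - a - 1 := rfl
        omega
      have hbcast : (b:ℤ) < (part l a : ℤ) := by exact_mod_cast h1
      simp only [Finset.mem_filter, Finset.mem_range]
      refine ⟨by omega, ?_, ?_⟩
      · simp only [hf, hidx1, hidx]
        have e1 : hh m b + 1 + k = (hh m b + k) + 1 := by ring
        rw [e1]
        omega
      · simp only [hf, hidx, hmm]
        rw [max_le_iff]
        constructor <;> omega
    · -- backward membership
      intro i hi
      simp only [Finset.mem_filter, Finset.mem_range] at hi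
      obtain ⟨hiT, hdown, hht⟩ := hi
      have e2 : ((i+1:ℕ):ℤ) - T = ((i:ℤ) - T) + 1 := by push_cast; ring
      have e1 : (i:ℤ) - T + 1 + k = ((i:ℤ) - T + k) + 1 := by ring
      simp only [hf, e2, e1] at hdown hht
      have l1 := bb_succ_le hl ((i:ℤ) - T + k)
      have l2 := bb_succ_ge hl ((i:ℤ) - T + k)
      have m1 := bb_succ_le hm ((i:ℤ) - T)
      have m2 := bb_succ_ge hm ((i:ℤ) - T)
      have hbl : bb l ((i:ℤ) - T + k) = bb l ((i:ℤ) - T + k + 1) + 1 := by omega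
      have hbm : bb m ((i:ℤ) - T + 1) = bb m ((i:ℤ) - T) := by omega
      have hhit : hit l ((i:ℤ) - T + k) := by unfold hit; omega
      have hnh : ¬ hit m ((i:ℤ) - T) := by unfold hit; omega
      obtain ⟨a0, hpa0⟩ := (hit_iff hl).mp hhit
      have haeq : bb l ((i:ℤ) - T + k + 1) = a0 := by rw [← hpa0, bb_pp_succ hl]
      have hpa : pp l (bb l ((i:ℤ) - T + k + 1)) = (i:ℤ) - T + k := by
        rw [haeq]; exact hpa0
      have hhb : hh m (((i:ℤ) - T + (bb m ((i:ℤ) - T) : ℤ)).toNat) = (i:ℤ) - T :=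
        hh_surj hm hnh
      have hbz : ((((i:ℤ) - T + (bb m ((i:ℤ) - T) : ℤ)).toNat : ℕ) : ℤ)
          = (i:ℤ) - T + (bb m ((i:ℤ) - T) : ℤ) := Int.toNat_of_nonneg (bb_nonneg_add hm)
      rw [hmm, max_le_iff] at hht
      have hpartl : (part l (bb l ((i:ℤ) - T + k + 1)) : ℤ)
          = (i:ℤ) - T + k + (bb l ((i:ℤ) - T + k + 1)) + 1 := by
        have hd : pp l (bb l ((i:ℤ) - T + k + 1))
            = (part l (bb l ((i:ℤ) - T + k + 1)) : ℤ) - (bb l ((i:ℤ) - T + k + 1)) - 1 := rfl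
        omega
      have hcell1 : (((i:ℤ) - T + (bb m ((i:ℤ) - T) : ℤ)).toNat : ℕ)
          < part l (bb l ((i:ℤ) - T + k + 1)) := by
        have : ((((i:ℤ) - T + (bb m ((i:ℤ) - T) : ℤ)).toNat : ℕ) : ℤ)
            < (part l (bb l ((i:ℤ) - T + k + 1)) : ℤ) := by omega
        exact_mod_cast this
      have hcell2 : part m (bb l ((i:ℤ) - T + k + 1))
          ≤ (((i:ℤ) - T + (bb m ((i:ℤ) - T) : ℤ)).toNat : ℕ) := by
        apply (le_iff_pp_lt_hh hm).mpr
        rw [hhb, ← bb_le_iff hm (t := (i:ℤ) - T)]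
        omega
      simp only [Finset.mem_filter, Finset.mem_product, Finset.mem_range]
      have hpartpos : 0 < part l (bb l ((i:ℤ) - T + k + 1)) := by omega
      have halen : bb l ((i:ℤ) - T + k + 1) < l.length := by
        by_contra hc
        push_neg at hc
        rw [part_eq_zero_of_le hc] at hpartpos
        omega
      have hpart0 : part l (bb l ((i:ℤ) - T + k + 1)) ≤ part l 0 :=
        part_anti hl (Nat.zero_le _)
      exact ⟨⟨by omega, by omega⟩, hcell1, hcell2, by rw [hpa, hhb]; ring⟩
    · -- left inverse
      rintro ⟨a, b⟩ hab
      simp only [Finset.mem_filter, Finset.mem_product, Finset.mem_range] at hab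
      obtain ⟨⟨ha, hb⟩, h1, h2, h3⟩ := hab
      have hlow : -(T:ℤ) ≤ hh m b := le_trans (by omega) (hh_lower m b)
      have hidx : (((hh m b + T).toNat : ℕ) : ℤ) - T = hh m b := by omega
      have hpa : pp l a = hh m b + k := by omega
      have hbsum : hh m b + (bb m (hh m b) : ℤ) = (b:ℤ) := hh_add_bb hm b
      have c1 : bb l ((((hh m b + T).toNat : ℕ) : ℤ) - T + k + 1) = a := by
        rw [hidx]
        have e3 : hh m b + k + 1 = pp l a + 1 := by omega
        rw [e3, bb_pp_succ hl]
      have c2 : (((((hh m b + T).toNat : ℕ) : ℤ) - T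
          + (bb m ((((hh m b + T).toNat : ℕ) : ℤ) - T) : ℤ)).toNat : ℕ) = b := by
        rw [hidx, hbsum]
        simp
      exact Prod.ext c1 c2
    · -- right inverse
      intro i hi
      simp only [Finset.mem_filter, Finset.mem_range] at hi
      obtain ⟨hiT, hdown, hht⟩ := hi
      have e2 : ((i+1:ℕ):ℤ) - T = ((i:ℤ) - T) + 1 := by push_cast; ring
      have e1 : (i:ℤ) - T + 1 + k = ((i:ℤ) - T + k) + 1 := by ring
      simp only [hf, e2, e1] at hdown hht
      have m1 := bb_succ_le hm ((i:ℤ) - T)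
      have l2 := bb_succ_ge hl ((i:ℤ) - T + k)
      have l1 := bb_succ_le hl ((i:ℤ) - T + k)
      have m2 := bb_succ_ge hm ((i:ℤ) - T)
      have hnh : ¬ hit m ((i:ℤ) - T) := by unfold hit; omega
      have hhb : hh m (((i:ℤ) - T + (bb m ((i:ℤ) - T) : ℤ)).toNat) = (i:ℤ) - T :=
        hh_surj hm hnh
      rw [hhb]
      omega
  -- Bijection 2 : v-cells ↔ up-steps
  have hbij2 : ((Finset.range N' ×ˢ Finset.range N').filter
      (fun ab => ab.2 < part l ab.1 ∧ part m ab.1 ≤ ab.2 ∧ hh l ab.2 - pp m ab.1 = k)).card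
      = ((Finset.range (2*T)).filter (fun i => f (i+1) = f i + 1 ∧ mm - 1 ≤ f i)).card := by
    apply Finset.card_bij' (fun ab _ => (pp m ab.1 + T).toNat)
      (fun i _ => (bb m ((i:ℤ) - T + 1), ((i:ℤ) - T + k + (bb l ((i:ℤ) - T + k) : ℤ)).toNat))
    · -- forward membership
      rintro ⟨a, b⟩ hab
      simp only [Finset.mem_filter, Finset.mem_product, Finset.mem_range] at hab
      obtain ⟨⟨ha, hb⟩, h1, h2, h3⟩ := hab
      have hlow : -(T:ℤ) ≤ pp m a := le_trans (by omega) (pp_lower m a)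
      have hup : pp m a < T := lt_of_le_of_lt (pp_upper hm a) (by omega)
      have hidx : (((pp m a + T).toNat : ℕ) : ℤ) - T = pp m a := by omega
      have hidx1 : (((pp m a + T).toNat + 1 : ℕ) : ℤ) - T = pp m a + 1 := by push_cast; omega
      have hhb : hh l b = pp m a + k := by omega
      have hhit : hit m (pp m a) := (hit_iff hm).mpr ⟨a, rfl⟩
      have hnh : ¬ hit l (pp m a + k) := by rw [← hhb]; exact not_hit_hh hl b
      have hbm := bb_of_hit hm hhit
      have hbl := bb_of_not_hit hl hnh
      have hbpa : bb m (pp m a) = a + 1 := bb_pp hm a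
      have hlt : a < bb l (pp m a + k) := by
        have hc := (cell_iff hl).mp h1
        rw [hhb] at hc
        have : a < bb l (pp m a + k + 1) := (lt_bb_iff hl).mpr (by omega)
        omega
      have hbsum : hh l b + (bb l (hh l b) : ℤ) = b := hh_add_bb hl b
      have hbq : (b : ℤ) = pp m a + k + (bb l (pp m a + k) : ℤ) := by rw [← hhb]; omega
      have hpartm : (part m a : ℤ) = pp m a + a + 1 := by
        have hd : pp m a = (part m a : ℤ) - a - 1 := rfl
        omega
      have hle : (part m a : ℤ) ≤ (b:ℤ) := by exact_mod_cast h2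
      simp only [Finset.mem_filter, Finset.mem_range]
      refine ⟨by omega, ?_, ?_⟩
      · simp only [hf, hidx1, hidx]
        have e1 : pp m a + 1 + k = (pp m a + k) + 1 := by ring
        rw [e1]
        omega
      · simp only [hf, hidx, hmm]
        rw [sub_le_iff_le_add, max_le_iff]
        constructor <;> omega
    · -- backward membership
      intro i hi
      simp only [Finset.mem_filter, Finset.mem_range] at hi
      obtain ⟨hiT, hupstep, hht⟩ := hi
      have e2 : ((i+1:ℕ):ℤ) - T = ((i:ℤ) - T) + 1 := by push_cast; ring
      have e1 : (i:ℤ) - T + 1 + k = ((i:ℤ) - T + k) + 1 := by ring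
      simp only [hf, e2, e1] at hupstep hht
      have l1 := bb_succ_le hl ((i:ℤ) - T + k)
      have l2 := bb_succ_ge hl ((i:ℤ) - T + k)
      have m1 := bb_succ_le hm ((i:ℤ) - T)
      have m2 := bb_succ_ge hm ((i:ℤ) - T)
      have hbm : bb m ((i:ℤ) - T) = bb m ((i:ℤ) - T + 1) + 1 := by omega
      have hbl : bb l ((i:ℤ) - T + k + 1) = bb l ((i:ℤ) - T + k) := by omega
      have hhit : hit m ((i:ℤ) - T) := by unfold hit; omega
      have hnh : ¬ hit l ((i:ℤ) - T + k) := by unfold hit; omega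
      obtain ⟨a0, hpa0⟩ := (hit_iff hm).mp hhit
      have haeq : bb m ((i:ℤ) - T + 1) = a0 := by rw [← hpa0, bb_pp_succ hm]
      have hpa : pp m (bb m ((i:ℤ) - T + 1)) = (i:ℤ) - T := by rw [haeq]; exact hpa0
      have hhb : hh l (((i:ℤ) - T + k + (bb l ((i:ℤ) - T + k) : ℤ)).toNat) = (i:ℤ) - T + k :=
        hh_surj hl hnh
      have hbz : ((((i:ℤ) - T + k + (bb l ((i:ℤ) - T + k) : ℤ)).toNat : ℕ) : ℤ)
          = (i:ℤ) - T + k + (bb l ((i:ℤ) - T + k) : ℤ) := by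
        have := bb_nonneg_add hl (t := (i:ℤ) - T + k)
        omega
      rw [hmm, sub_le_iff_le_add, max_le_iff] at hht
      have hcell1 : (((i:ℤ) - T + k + (bb l ((i:ℤ) - T + k) : ℤ)).toNat : ℕ)
          < part l (bb m ((i:ℤ) - T + 1)) := by
        apply (cell_iff hl).mpr
        rw [hhb]
        have : bb m ((i:ℤ) - T + 1) < bb l ((i:ℤ) - T + k + 1) := by omega
        have := (lt_bb_iff hl).mp this
        omega
      have hpartm : (part m (bb m ((i:ℤ) - T + 1)) : ℤ)
          = (i:ℤ) - T + (bb m ((i:ℤ) - T + 1)) + 1 := by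
        have hd : pp m (bb m ((i:ℤ) - T + 1))
            = (part m (bb m ((i:ℤ) - T + 1)) : ℤ) - (bb m ((i:ℤ) - T + 1)) - 1 := rfl
        omega
      have hcell2 : part m (bb m ((i:ℤ) - T + 1))
          ≤ (((i:ℤ) - T + k + (bb l ((i:ℤ) - T + k) : ℤ)).toNat : ℕ) := by
        have : (part m (bb m ((i:ℤ) - T + 1)) : ℤ)
            ≤ ((((i:ℤ) - T + k + (bb l ((i:ℤ) - T + k) : ℤ)).toNat : ℕ) : ℤ) := by omega
        exact_mod_cast this
      simp only [Finset.mem_filter, Finset.mem_product, Finset.mem_range]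
      have hpartpos : 0 < part l (bb m ((i:ℤ) - T + 1)) := by omega
      have halen : bb m ((i:ℤ) - T + 1) < l.length := by
        by_contra hc
        push_neg at hc
        rw [part_eq_zero_of_le hc] at hpartpos
        omega
      have hpart0 : part l (bb m ((i:ℤ) - T + 1)) ≤ part l 0 := part_anti hl (Nat.zero_le _)
      refine ⟨⟨by omega, by omega⟩, hcell1, hcell2, by rw [hpa, hhb]; ring⟩
    · -- left inverse
      rintro ⟨a, b⟩ hab
      simp only [Finset.mem_filter, Finset.mem_product, Finset.mem_range] at hab
      obtain ⟨⟨ha, hb⟩, h1, h2, h3⟩ := hab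
      have hlow : -(T:ℤ) ≤ pp m a := le_trans (by omega) (pp_lower m a)
      have hidx : (((pp m a + T).toNat : ℕ) : ℤ) - T = pp m a := by omega
      have hhb : hh l b = pp m a + k := by omega
      have hbsum : hh l b + (bb l (hh l b) : ℤ) = (b:ℤ) := hh_add_bb hl b
      have c1 : bb m ((((pp m a + T).toNat : ℕ) : ℤ) - T + 1) = a := by
        rw [hidx, bb_pp_succ hm]
      have c2 : (((((pp m a + T).toNat : ℕ) : ℤ) - T + k
          + (bb l ((((pp m a + T).toNat : ℕ) : ℤ) - T + k) : ℤ)).toNat : ℕ) = b := by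
        rw [hidx, ← hhb, hbsum]
        simp
      exact Prod.ext c1 c2
    · -- right inverse
      intro i hi
      simp only [Finset.mem_filter, Finset.mem_range] at hi
      obtain ⟨hiT, hupstep, hht⟩ := hi
      have e2 : ((i+1:ℕ):ℤ) - T = ((i:ℤ) - T) + 1 := by push_cast; ring
      have e1 : (i:ℤ) - T + 1 + k = ((i:ℤ) - T + k) + 1 := by ring
      simp only [hf, e2, e1] at hupstep hht
      have l1 := bb_succ_le hl ((i:ℤ) - T + k)
      have l2 := bb_succ_ge hl ((i:ℤ) - T + k)
      have m1 := bb_succ_le hm ((i:ℤ) - T)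
      have m2 := bb_succ_ge hm ((i:ℤ) - T)
      have hhit : hit m ((i:ℤ) - T) := by unfold hit; omega
      obtain ⟨a0, hpa0⟩ := (hit_iff hm).mp hhit
      have haeq : bb m ((i:ℤ) - T + 1) = a0 := by rw [← hpa0, bb_pp_succ hm]
      have hpa : pp m (bb m ((i:ℤ) - T + 1)) = (i:ℤ) - T := by rw [haeq]; exact hpa0
      rw [hpa]
      omega
  omega

lemma filter_range_lt {B m : ℕ} (h : m ≤ B) :
    (Finset.range B).filter (fun j => j < m) = Finset.range m := by
  ext j
  simp only [Finset.mem_filter, Finset.mem_range]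
  omega

lemma prod_box (L : List ℕ) (hL : L.Pairwise (· ≥ ·)) (g : ℕ → ℕ → ℂ) {A B : ℕ}
    (hA : L.length ≤ A) (hB : part L 0 ≤ B) :
    (∏ i ∈ Finset.range L.length, ∏ j ∈ Finset.range (part L i), g i j)
    = ∏ ab ∈ (Finset.range A ×ˢ Finset.range B).filter (fun ab => ab.2 < part L ab.1),
        g ab.1 ab.2 := by
  rw [Finset.prod_filter, Finset.prod_product]
  have h1 : ∀ i, (∏ j ∈ Finset.range B, if j < part L i then g i j else 1)
      = ∏ j ∈ Finset.range (part L i), g i j := by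
    intro i
    rw [← Finset.prod_filter, filter_range_lt (le_trans (part_anti hL (Nat.zero_le i)) hB)]
  simp only [h1]
  apply Finset.prod_subset (Finset.range_subset_range.mpr hA)
  intro i _ hi
  rw [part_eq_zero_of_le (by simpa using hi)]
  simp

lemma prod_box_swap (N : ℕ) (P : ℕ × ℕ → Prop) [DecidablePred P] (g : ℕ × ℕ → ℂ) :
    ∏ ab ∈ (Finset.range N ×ˢ Finset.range N).filter P, g ab
    = ∏ ab ∈ (Finset.range N ×ˢ Finset.range N).filter (fun ab => P (ab.2, ab.1)),
        g (ab.2, ab.1) := by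
  refine Finset.prod_bij' (fun ab _ => (ab.2, ab.1)) (fun ab _ => (ab.2, ab.1))
    ?_ ?_ ?_ ?_ ?_
  · rintro ⟨a, b⟩ hab
    obtain ⟨hbox, hP⟩ := Finset.mem_filter.mp hab
    obtain ⟨h1, h2⟩ := Finset.mem_product.mp hbox
    exact Finset.mem_filter.mpr ⟨Finset.mem_product.mpr ⟨h2, h1⟩, hP⟩
  · rintro ⟨a, b⟩ hab
    obtain ⟨hbox, hP⟩ := Finset.mem_filter.mp hab
    obtain ⟨h1, h2⟩ := Finset.mem_product.mp hbox
    exact Finset.mem_filter.mpr ⟨Finset.mem_product.mpr ⟨h2, h1⟩, hP⟩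
  · rintro ⟨a, b⟩ _; rfl
  · rintro ⟨a, b⟩ _; rfl
  · rintro ⟨a, b⟩ _; rfl

lemma conjPart_anti (l : List ℕ) {b b' : ℕ} (h : b ≤ b') : conjPart l b' ≤ conjPart l b := by
  unfold conjPart
  apply List.Sublist.length_le
  apply List.monotone_filter_right
  intro p hp
  simp only [decide_eq_true_eq] at *
  omega

lemma prod_box' (n A B : ℕ) (c : ℕ → ℕ) (hc : ∀ i j : ℕ, i ≤ j → c j ≤ c i)
    (hzero : ∀ i, n ≤ i → c i = 0) (hA : n ≤ A) (hB : c 0 ≤ B) (g : ℕ → ℕ → ℂ) :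
    (∏ i ∈ Finset.range n, ∏ j ∈ Finset.range (c i), g i j)
    = ∏ ab ∈ (Finset.range A ×ˢ Finset.range B).filter (fun ab => ab.2 < c ab.1),
        g ab.1 ab.2 := by
  rw [Finset.prod_filter, Finset.prod_product]
  have h1 : ∀ i, (∏ j ∈ Finset.range B, if j < c i then g i j else 1)
      = ∏ j ∈ Finset.range (c i), g i j := by
    intro i
    rw [← Finset.prod_filter, filter_range_lt (le_trans (hc 0 i (Nat.zero_le i)) hB)]
  simp only [h1]
  apply Finset.prod_subset (Finset.range_subset_range.mpr hA)
  intro i _ hi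
  rw [hzero i (by simpa using hi)]
  simp

lemma card_split {α : Type*} (s : Finset α) (p q : α → Prop) [DecidablePred p]
    [DecidablePred q] :
    (s.filter p).card = (s.filter (fun x => p x ∧ q x)).card
      + (s.filter (fun x => p x ∧ ¬ q x)).card := by
  have h := Finset.card_filter_add_card_filter_not (s := s.filter p) (p := q)
  rw [Finset.filter_filter, Finset.filter_filter] at h
  exact h.symm

lemma conjList_sorted {l : List ℕ} : (conjList l).Pairwise (· ≥ ·) := by
  unfold conjList
  rw [List.pairwise_map]
  apply List.Pairwise.imp _ (List.pairwise_lt_range (n := part l 0))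
  intro a b hab
  exact conjPart_anti l (le_of_lt hab)

noncomputable def Fq (q u : ℂ) : ℤ → ℂ := fun t => 1 - q ^ t * u
def phif (lam mu : List ℕ) : ℕ × ℕ → ℤ := fun ab => hh lam ab.2 - pp mu ab.1
def psif (lam mu : List ℕ) : ℕ × ℕ → ℤ := fun ab => pp lam ab.1 - hh mu ab.2

lemma nek_canon (q u : ℂ) (lam mu : List ℕ) (hl : lam.Pairwise (· ≥ ·))
    (hm : mu.Pairwise (· ≥ ·)) (N : ℕ) (hn1 : lam.length ≤ N) (hn2 : part lam 0 ≤ N)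
    (hn3 : mu.length ≤ N) (hn4 : part mu 0 ≤ N) :
    nek q u lam mu
      = (∏ ab ∈ (Finset.range N ×ˢ Finset.range N).filter
            (fun ab => ab.2 < part lam ab.1), Fq q u (phif lam mu ab))
        * (∏ ab ∈ (Finset.range N ×ˢ Finset.range N).filter
            (fun ab => ab.2 < part mu ab.1), Fq q u (psif lam mu ab)) := by
  unfold nek
  congr 1
  · have step1 : (∏ i ∈ Finset.range lam.length, ∏ j ∈ Finset.range (part lam i),
        (1 - q ^ (-((conjPart lam j : ℤ) - ((i : ℤ) + 1))
          - ((part mu i : ℤ) - ((j : ℤ) + 1)) - 1) * u))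
        = ∏ i ∈ Finset.range lam.length, ∏ j ∈ Finset.range (part lam i),
          Fq q u (phif lam mu (i, j)) := by
      apply Finset.prod_congr rfl
      intro i _
      apply Finset.prod_congr rfl
      intro j _
      show _ = 1 - q ^ (hh lam j - pp mu i) * u
      have : -((conjPart lam j : ℤ) - ((i : ℤ) + 1))
          - ((part mu i : ℤ) - ((j : ℤ) + 1)) - 1 = hh lam j - pp mu i := by
        unfold hh pp; ring
      rw [this]
    rw [step1]
    exact prod_box' lam.length N N (part lam) (fun i j h => part_anti hl h)
      (fun i h => part_eq_zero_of_le h) hn1 hn2 (fun i j => Fq q u (phif lam mu (i, j)))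
  · have step1 : (∏ i ∈ Finset.range mu.length, ∏ j ∈ Finset.range (part mu i),
        (1 - q ^ (((conjPart mu j : ℤ) - ((i : ℤ) + 1))
          + ((part lam i : ℤ) - ((j : ℤ) + 1)) + 1) * u))
        = ∏ i ∈ Finset.range mu.length, ∏ j ∈ Finset.range (part mu i),
          Fq q u (psif lam mu (i, j)) := by
      apply Finset.prod_congr rfl
      intro i _
      apply Finset.prod_congr rfl
      intro j _
      show _ = 1 - q ^ (pp lam i - hh mu j) * u
      have : ((conjPart mu j : ℤ) - ((i : ℤ) + 1))
          + ((part lam i : ℤ) - ((j : ℤ) + 1)) + 1 = pp lam i - hh mu j := by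
        unfold hh pp; ring
      rw [this]
    rw [step1]
    exact prod_box' mu.length N N (part mu) (fun i j h => part_anti hm h)
      (fun i h => part_eq_zero_of_le h) hn3 hn4 (fun i j => Fq q u (psif lam mu (i, j)))

lemma nek_conj_canon (q u : ℂ) (lam mu : List ℕ) (hl : lam.Pairwise (· ≥ ·))
    (hm : mu.Pairwise (· ≥ ·)) (N : ℕ) (hn1 : lam.length ≤ N) (hn2 : part lam 0 ≤ N)
    (hn3 : mu.length ≤ N) (hn4 : part mu 0 ≤ N) :
    nek q u (conjList mu) (conjList lam)
      = (∏ ab ∈ (Finset.range N ×ˢ Finset.range N).filter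
            (fun ab => ab.2 < part mu ab.1), Fq q u (phif lam mu ab))
        * (∏ ab ∈ (Finset.range N ×ˢ Finset.range N).filter
            (fun ab => ab.2 < part lam ab.1), Fq q u (psif lam mu ab)) := by
  have hlen_m : (conjList mu).length = part mu 0 := by simp [conjList]
  have hlen_l : (conjList lam).length = part lam 0 := by simp [conjList]
  rw [nek_canon q u (conjList mu) (conjList lam) conjList_sorted conjList_sorted N
    (by rw [hlen_m]; exact hn4)
    (by rw [part_conjList hm 0]; exact le_trans (conjPart_le_length mu 0) hn3)
    (by rw [hlen_l]; exact hn2)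
    (by rw [part_conjList hl 0]; exact le_trans (conjPart_le_length lam 0) hn1)]
  congr 1
  · -- first factor
    have hfc : (Finset.range N ×ˢ Finset.range N).filter
        (fun ab => ab.2 < part (conjList mu) ab.1)
        = (Finset.range N ×ˢ Finset.range N).filter
        (fun ab => ab.2 < conjPart mu ab.1) :=
      Finset.filter_congr fun ab _ => by rw [part_conjList hm]
    rw [hfc, prod_box_swap N (fun ab => ab.2 < conjPart mu ab.1)
      (fun ab => Fq q u (phif (conjList mu) (conjList lam) ab))]
    have hfc2 : (Finset.range N ×ˢ Finset.range N).filter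
        (fun ab => ab.1 < conjPart mu ab.2)
        = (Finset.range N ×ˢ Finset.range N).filter
        (fun ab => ab.2 < part mu ab.1) :=
      Finset.filter_congr fun ab _ => by rw [lt_conjPart_iff hm]
    rw [hfc2]
    apply Finset.prod_congr rfl
    intro ab _
    show Fq q u (phif (conjList mu) (conjList lam) (ab.2, ab.1)) = _
    unfold phif
    congr 1
    show hh (conjList mu) ab.1 - pp (conjList lam) ab.2 = hh lam ab.2 - pp mu ab.1
    unfold hh pp
    rw [conjPart_conjList hm, part_conjList hl]
    ring
  · -- second factor
    have hfc : (Finset.range N ×ˢ Finset.range N).filter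
        (fun ab => ab.2 < part (conjList lam) ab.1)
        = (Finset.range N ×ˢ Finset.range N).filter
        (fun ab => ab.2 < conjPart lam ab.1) :=
      Finset.filter_congr fun ab _ => by rw [part_conjList hl]
    rw [hfc, prod_box_swap N (fun ab => ab.2 < conjPart lam ab.1)
      (fun ab => Fq q u (psif (conjList mu) (conjList lam) ab))]
    have hfc2 : (Finset.range N ×ˢ Finset.range N).filter
        (fun ab => ab.1 < conjPart lam ab.2)
        = (Finset.range N ×ˢ Finset.range N).filter
        (fun ab => ab.2 < part lam ab.1) :=
      Finset.filter_congr fun ab _ => by rw [lt_conjPart_iff hl]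
    rw [hfc2]
    apply Finset.prod_congr rfl
    intro ab _
    show Fq q u (psif (conjList mu) (conjList lam) (ab.2, ab.1)) = _
    unfold psif
    congr 1
    show pp (conjList mu) ab.2 - hh (conjList lam) ab.1 = pp lam ab.1 - hh mu ab.2
    unfold hh pp
    rw [conjPart_conjList hl, part_conjList hm]
    ring

end NekrasovProof

theorem stmt6 (q : ℂ) (hq : q ≠ 0)
    (lam mu : List ℕ) (hlam : IsPartition lam) (hmu : IsPartition mu) (u : ℂ) :
    nek q u lam mu = nek q u (conjList mu) (conjList lam) := by
  classical
  obtain ⟨hl, -⟩ := hlam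
  obtain ⟨hm, -⟩ := hmu
  obtain ⟨N, hn1, hn2, hn3, hn4⟩ : ∃ N : ℕ, lam.length ≤ N ∧ part lam 0 ≤ N ∧
      mu.length ≤ N ∧ part mu 0 ≤ N :=
    ⟨lam.length + mu.length + part lam 0 + part mu 0, by omega, by omega, by omega, by omega⟩
  rw [nek_canon q u lam mu hl hm N hn1 hn2 hn3 hn4,
    nek_conj_canon q u lam mu hl hm N hn1 hn2 hn3 hn4]
  set Al : Finset (ℕ × ℕ) := (Finset.range N ×ˢ Finset.range N).filter
    (fun ab => ab.2 < part lam ab.1) with hAl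
  set Am : Finset (ℕ × ℕ) := (Finset.range N ×ˢ Finset.range N).filter
    (fun ab => ab.2 < part mu ab.1) with hAm
  set V : Finset ℤ := ((Al.image (phif lam mu) ∪ Am.image (psif lam mu))
    ∪ Am.image (phif lam mu)) ∪ Al.image (psif lam mu) with hV
  have expand : ∀ (S : Finset (ℕ × ℕ)) (f : ℕ × ℕ → ℤ), (∀ ab ∈ S, f ab ∈ V) →
      ∏ ab ∈ S, Fq q u (f ab)
      = ∏ t ∈ V, (Fq q u t) ^ ((S.filter (fun ab => f ab = t)).card) := by
    intro S f hf
    rw [← Finset.prod_fiberwise_of_maps_to hf (fun ab => Fq q u (f ab))]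
    apply Finset.prod_congr rfl
    intro t _
    rw [show (∏ i ∈ S.filter (fun ab => f ab = t), Fq q u (f i))
        = ∏ _i ∈ S.filter (fun ab => f ab = t), Fq q u t from
      Finset.prod_congr rfl (fun ab hab => by rw [(Finset.mem_filter.mp hab).2])]
    exact Finset.prod_const _
  rw [expand Al (phif lam mu) (fun ab hab => by
      simp only [hV, Finset.mem_union]
      exact Or.inl (Or.inl (Or.inl (Finset.mem_image_of_mem _ hab)))),
    expand Am (psif lam mu) (fun ab hab => by
      simp only [hV, Finset.mem_union]
      exact Or.inl (Or.inl (Or.inr (Finset.mem_image_of_mem _ hab)))),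
    expand Am (phif lam mu) (fun ab hab => by
      simp only [hV, Finset.mem_union]
      exact Or.inl (Or.inr (Finset.mem_image_of_mem _ hab))),
    expand Al (psif lam mu) (fun ab hab => by
      simp only [hV, Finset.mem_union]
      exact Or.inr (Finset.mem_image_of_mem _ hab)),
    ← Finset.prod_mul_distrib, ← Finset.prod_mul_distrib]
  apply Finset.prod_congr rfl
  intro t _
  rw [← pow_add, ← pow_add]
  congr 1
  -- the counting identity
  have e1 : (Al.filter (fun ab => phif lam mu ab = t)).card
      = ((Finset.range N ×ˢ Finset.range N).filter
          (fun ab => (ab.2 < part lam ab.1 ∧ phif lam mu ab = t)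
            ∧ ab.2 < part mu ab.1)).card
        + ((Finset.range N ×ˢ Finset.range N).filter
          (fun ab => (ab.2 < part lam ab.1 ∧ phif lam mu ab = t)
            ∧ ¬ ab.2 < part mu ab.1)).card := by
    rw [hAl, Finset.filter_filter]
    exact card_split _ _ _
  have e2 : (Am.filter (fun ab => psif lam mu ab = t)).card
      = ((Finset.range N ×ˢ Finset.range N).filter
          (fun ab => (ab.2 < part mu ab.1 ∧ psif lam mu ab = t)
            ∧ ab.2 < part lam ab.1)).card
        + ((Finset.range N ×ˢ Finset.range N).filter
          (fun ab => (ab.2 < part mu ab.1 ∧ psif lam mu ab = t)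
            ∧ ¬ ab.2 < part lam ab.1)).card := by
    rw [hAm, Finset.filter_filter]
    exact card_split _ _ _
  have e3 : (Am.filter (fun ab => phif lam mu ab = t)).card
      = ((Finset.range N ×ˢ Finset.range N).filter
          (fun ab => (ab.2 < part mu ab.1 ∧ phif lam mu ab = t)
            ∧ ab.2 < part lam ab.1)).card
        + ((Finset.range N ×ˢ Finset.range N).filter
          (fun ab => (ab.2 < part mu ab.1 ∧ phif lam mu ab = t)
            ∧ ¬ ab.2 < part lam ab.1)).card := by
    rw [hAm, Finset.filter_filter]
    exact card_split _ _ _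
  have e4 : (Al.filter (fun ab => psif lam mu ab = t)).card
      = ((Finset.range N ×ˢ Finset.range N).filter
          (fun ab => (ab.2 < part lam ab.1 ∧ psif lam mu ab = t)
            ∧ ab.2 < part mu ab.1)).card
        + ((Finset.range N ×ˢ Finset.range N).filter
          (fun ab => (ab.2 < part lam ab.1 ∧ psif lam mu ab = t)
            ∧ ¬ ab.2 < part mu ab.1)).card := by
    rw [hAl, Finset.filter_filter]
    exact card_split _ _ _
  have c1 : (Finset.range N ×ˢ Finset.range N).filter
        (fun ab => (ab.2 < part lam ab.1 ∧ phif lam mu ab = t) ∧ ab.2 < part mu ab.1)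
      = (Finset.range N ×ˢ Finset.range N).filter
        (fun ab => (ab.2 < part mu ab.1 ∧ phif lam mu ab = t) ∧ ab.2 < part lam ab.1) :=
    Finset.filter_congr fun ab _ => by tauto
  have c2 : (Finset.range N ×ˢ Finset.range N).filter
        (fun ab => (ab.2 < part mu ab.1 ∧ psif lam mu ab = t) ∧ ab.2 < part lam ab.1)
      = (Finset.range N ×ˢ Finset.range N).filter
        (fun ab => (ab.2 < part lam ab.1 ∧ psif lam mu ab = t) ∧ ab.2 < part mu ab.1) :=
    Finset.filter_congr fun ab _ => by tauto
  have k1 : ((Finset.range N ×ˢ Finset.range N).filter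
        (fun ab => (ab.2 < part lam ab.1 ∧ psif lam mu ab = t)
          ∧ ¬ ab.2 < part mu ab.1)).card
      = ((Finset.range N ×ˢ Finset.range N).filter
        (fun ab => (ab.2 < part lam ab.1 ∧ phif lam mu ab = t)
          ∧ ¬ ab.2 < part mu ab.1)).card := by
    have hKL := KL lam mu hl hm t N hn1 hn2
    rw [show (Finset.range N ×ˢ Finset.range N).filter
          (fun ab => (ab.2 < part lam ab.1 ∧ psif lam mu ab = t) ∧ ¬ ab.2 < part mu ab.1)
        = (Finset.range N ×ˢ Finset.range N).filter
          (fun ab => ab.2 < part lam ab.1 ∧ part mu ab.1 ≤ ab.2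
            ∧ pp lam ab.1 - hh mu ab.2 = t) from
      Finset.filter_congr fun ab _ => by
        unfold psif
        constructor
        · rintro ⟨⟨h1, h2⟩, h3⟩; exact ⟨h1, by omega, h2⟩
        · rintro ⟨h1, h2, h3⟩; exact ⟨⟨h1, h3⟩, by omega⟩]
    rw [show (Finset.range N ×ˢ Finset.range N).filter
          (fun ab => (ab.2 < part lam ab.1 ∧ phif lam mu ab = t) ∧ ¬ ab.2 < part mu ab.1)
        = (Finset.range N ×ˢ Finset.range N).filter
          (fun ab => ab.2 < part lam ab.1 ∧ part mu ab.1 ≤ ab.2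
            ∧ hh lam ab.2 - pp mu ab.1 = t) from
      Finset.filter_congr fun ab _ => by
        unfold phif
        constructor
        · rintro ⟨⟨h1, h2⟩, h3⟩; exact ⟨h1, by omega, h2⟩
        · rintro ⟨h1, h2, h3⟩; exact ⟨⟨h1, h3⟩, by omega⟩]
    exact hKL
  have k2 : ((Finset.range N ×ˢ Finset.range N).filter
        (fun ab => (ab.2 < part mu ab.1 ∧ phif lam mu ab = t)
          ∧ ¬ ab.2 < part lam ab.1)).card
      = ((Finset.range N ×ˢ Finset.range N).filter
        (fun ab => (ab.2 < part mu ab.1 ∧ psif lam mu ab = t)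
          ∧ ¬ ab.2 < part lam ab.1)).card := by
    have hKL := KL mu lam hm hl (-t) N hn3 hn4
    rw [show (Finset.range N ×ˢ Finset.range N).filter
          (fun ab => (ab.2 < part mu ab.1 ∧ phif lam mu ab = t) ∧ ¬ ab.2 < part lam ab.1)
        = (Finset.range N ×ˢ Finset.range N).filter
          (fun ab => ab.2 < part mu ab.1 ∧ part lam ab.1 ≤ ab.2
            ∧ pp mu ab.1 - hh lam ab.2 = -t) from
      Finset.filter_congr fun ab _ => by
        unfold phif
        constructor
        · rintro ⟨⟨h1, h2⟩, h3⟩; exact ⟨h1, by omega, by omega⟩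
        · rintro ⟨h1, h2, h3⟩; exact ⟨⟨h1, by omega⟩, by omega⟩]
    rw [show (Finset.range N ×ˢ Finset.range N).filter
          (fun ab => (ab.2 < part mu ab.1 ∧ psif lam mu ab = t) ∧ ¬ ab.2 < part lam ab.1)
        = (Finset.range N ×ˢ Finset.range N).filter
          (fun ab => ab.2 < part mu ab.1 ∧ part lam ab.1 ≤ ab.2
            ∧ hh mu ab.2 - pp lam ab.1 = -t) from
      Finset.filter_congr fun ab _ => by
        unfold psif
        constructor
        · rintro ⟨⟨h1, h2⟩, h3⟩; exact ⟨h1, by omega, by omega⟩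
        · rintro ⟨h1, h2, h3⟩; exact ⟨⟨h1, by omega⟩, by omega⟩]
    exact hKL
  rw [e1, e2, e3, e4, c1, c2]
  omega
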